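/- The quadratic form f(x) = −β x₀² + x₁² + x₂² + x₃² + x₄² + x₅², where β = −1 + 2√5, is anisotropic over ℚ(√5): if x₀, …, x₅ ∈ ℚ(√5) satisfy −β x₀² + x₁² + ⋯ + x₅² = 0, then x₀ = x₁ = ⋯ = x₅ = 0. -/

import Mathlib

set_option maxHeartbeats 1000000


/-- The real quadratic field `K = ℚ(√5)`, as a subfield of `ℝ`. -/
noncomputable def K : IntermediateField ℚ ℝ := IntermediateField.adjoin ℚ {Real.sqrt 5}

lemma sqrt5_irrational : Irrational (Real.sqrt 5) := by
  have h : Nat.Prime 5 := by norm_num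
  have := h.irrational_sqrt
  simpa using this

lemma rat_add_rat_sqrt5_eq_zero {a b : ℚ} (h : (a : ℝ) + b * Real.sqrt 5 = 0) :
    a = 0 ∧ b = 0 := by
  by_cases hb : b = 0
  · subst hb
    simp at h
    exact ⟨by exact_mod_cast h, rfl⟩
  · exfalso
    have hbR : (b : ℝ) ≠ 0 := by exact_mod_cast hb
    have : Real.sqrt 5 = ((-a / b : ℚ) : ℝ) := by
      push_cast
      field_simp
      linarith
    exact sqrt5_irrational ⟨-a / b, this.symm⟩

private noncomputable def Ssub : Subalgebra ℚ ℝ where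
  carrier := {y | ∃ a b : ℚ, y = a + b * Real.sqrt 5}
  mul_mem' := by
    rintro y z ⟨a, b, rfl⟩ ⟨c, d, rfl⟩
    have h5 : Real.sqrt 5 * Real.sqrt 5 = 5 := Real.mul_self_sqrt (by norm_num)
    refine ⟨a * c + 5 * b * d, a * d + b * c, ?_⟩
    push_cast
    linear_combination ((b : ℝ) * d) * h5
  add_mem' := by
    rintro y z ⟨a, b, rfl⟩ ⟨c, d, rfl⟩
    exact ⟨a + c, b + d, by push_cast; ring⟩
  algebraMap_mem' := fun r => ⟨r, 0, by simp⟩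

lemma mem_K_iff {x : ℝ} (hx : x ∈ K) : ∃ a b : ℚ, x = a + b * Real.sqrt 5 := by
  have hint : IsIntegral ℚ (Real.sqrt 5) := by
    refine ⟨Polynomial.X ^ 2 - Polynomial.C 5, ?_, ?_⟩
    · exact Polynomial.monic_X_pow_sub_C _ (by norm_num)
    · have h5 : Real.sqrt 5 ^ 2 = 5 := Real.sq_sqrt (by norm_num)
      simp [h5]
  have hKS : K.toSubalgebra = Algebra.adjoin ℚ {Real.sqrt 5} := by
    have := IntermediateField.adjoin_simple_toSubalgebra_of_isAlgebraic hint.isAlgebraic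
    simpa [K] using this
  have hx' : x ∈ Algebra.adjoin ℚ {Real.sqrt 5} := by
    rw [← hKS]; exact hx
  have hle : Algebra.adjoin ℚ {Real.sqrt 5} ≤ Ssub :=
    Algebra.adjoin_le (by rintro y rfl; exact ⟨0, 1, by simp⟩)
  exact hle hx'

/-- The quadratic form `f(x) = -β x₀² + x₁² + ⋯ + x₅²`, with `β = -1 + 2√5`, is
anisotropic over `ℚ(√5)`: any solution of `f(x) = 0` with all coordinates in `ℚ(√5)`
is trivial. -/
theorem stmt_18 :
    ∀ x : Fin 6 → ℝ, (∀ i, x i ∈ K) →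
      -(-1 + 2 * Real.sqrt 5) * x 0 ^ 2 + x 1 ^ 2 + x 2 ^ 2 + x 3 ^ 2 + x 4 ^ 2 + x 5 ^ 2 = 0 →
      ∀ i, x i = 0 := by
  intro x hx h
  choose a b hab using fun i => mem_K_iff (hx i)
  set s := Real.sqrt 5 with hsdef
  have hs : s ^ 2 = 5 := Real.sq_sqrt (by norm_num)
  have hs0 : (0:ℝ) ≤ s := Real.sqrt_nonneg 5
  rw [hab 0, hab 1, hab 2, hab 3, hab 4, hab 5] at h
  have hPQ : ((a 0 ^ 2 + 5 * b 0 ^ 2 - 20 * a 0 * b 0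
      + (a 1 ^ 2 + 5 * b 1 ^ 2) + (a 2 ^ 2 + 5 * b 2 ^ 2) + (a 3 ^ 2 + 5 * b 3 ^ 2)
      + (a 4 ^ 2 + 5 * b 4 ^ 2) + (a 5 ^ 2 + 5 * b 5 ^ 2) : ℚ) : ℝ)
      + ((2 * a 0 * b 0 - 2 * a 0 ^ 2 - 10 * b 0 ^ 2
      + 2 * a 1 * b 1 + 2 * a 2 * b 2 + 2 * a 3 * b 3 + 2 * a 4 * b 4 + 2 * a 5 * b 5 : ℚ) : ℝ)
      * s = 0 := by
    push_cast
    linear_combination h + (4 * (a 0 : ℝ) * b 0 - (b 0 : ℝ) ^ 2 + 2 * (b 0 : ℝ) ^ 2 * s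
      - (b 1 : ℝ) ^ 2 - (b 2 : ℝ) ^ 2 - (b 3 : ℝ) ^ 2 - (b 4 : ℝ) ^ 2 - (b 5 : ℝ) ^ 2) * hs
  obtain ⟨hP, hQ⟩ := rat_add_rat_sqrt5_eq_zero hPQ
  have hPR : ((a 0 : ℝ) ^ 2 + 5 * b 0 ^ 2 - 20 * a 0 * b 0
      + ((a 1 : ℝ) ^ 2 + 5 * b 1 ^ 2) + ((a 2 : ℝ) ^ 2 + 5 * b 2 ^ 2)
      + ((a 3 : ℝ) ^ 2 + 5 * b 3 ^ 2) + ((a 4 : ℝ) ^ 2 + 5 * b 4 ^ 2)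
      + ((a 5 : ℝ) ^ 2 + 5 * b 5 ^ 2)) = 0 := by exact_mod_cast congrArg (Rat.cast (K := ℝ)) hP
  have hQR : (2 * (a 0 : ℝ) * b 0 - 2 * (a 0 : ℝ) ^ 2 - 10 * (b 0 : ℝ) ^ 2
      + 2 * (a 1 : ℝ) * b 1 + 2 * (a 2 : ℝ) * b 2 + 2 * (a 3 : ℝ) * b 3
      + 2 * (a 4 : ℝ) * b 4 + 2 * (a 5 : ℝ) * b 5) = 0 := by
    exact_mod_cast congrArg (Rat.cast (K := ℝ)) hQ
  have hconj : (1 + 2 * s) * ((a 0 : ℝ) - b 0 * s) ^ 2 + ((a 1 : ℝ) - b 1 * s) ^ 2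
      + ((a 2 : ℝ) - b 2 * s) ^ 2 + ((a 3 : ℝ) - b 3 * s) ^ 2 + ((a 4 : ℝ) - b 4 * s) ^ 2
      + ((a 5 : ℝ) - b 5 * s) ^ 2 = 0 := by
    linear_combination hPR - s * hQR + ((b 0 : ℝ) ^ 2 - 4 * (a 0 : ℝ) * b 0
      + 2 * (b 0 : ℝ) ^ 2 * s + (b 1 : ℝ) ^ 2 + (b 2 : ℝ) ^ 2 + (b 3 : ℝ) ^ 2
      + (b 4 : ℝ) ^ 2 + (b 5 : ℝ) ^ 2) * hs
  have hy : ∀ i : Fin 6, (a i : ℝ) - b i * s = 0 := by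
    have hpos : (0:ℝ) < 1 + 2 * s := by linarith
    have t0 : 0 ≤ (1 + 2 * s) * ((a 0 : ℝ) - b 0 * s) ^ 2 :=
      mul_nonneg (le_of_lt hpos) (sq_nonneg _)
    have n1 := sq_nonneg ((a 1 : ℝ) - b 1 * s)
    have n2 := sq_nonneg ((a 2 : ℝ) - b 2 * s)
    have n3 := sq_nonneg ((a 3 : ℝ) - b 3 * s)
    have n4 := sq_nonneg ((a 4 : ℝ) - b 4 * s)
    have n5 := sq_nonneg ((a 5 : ℝ) - b 5 * s)
    have e0 : (1 + 2 * s) * ((a 0 : ℝ) - b 0 * s) ^ 2 = 0 := by linarith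
    have y0 : ((a 0 : ℝ) - b 0 * s) = 0 := by
      have := (mul_eq_zero.mp e0).resolve_left (ne_of_gt hpos)
      exact pow_eq_zero_iff two_ne_zero |>.mp this
    have y1 : ((a 1 : ℝ) - b 1 * s) = 0 :=
      pow_eq_zero_iff two_ne_zero |>.mp (by linarith)
    have y2 : ((a 2 : ℝ) - b 2 * s) = 0 :=
      pow_eq_zero_iff two_ne_zero |>.mp (by linarith)
    have y3 : ((a 3 : ℝ) - b 3 * s) = 0 :=
      pow_eq_zero_iff two_ne_zero |>.mp (by linarith)
    have y4 : ((a 4 : ℝ) - b 4 * s) = 0 :=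
      pow_eq_zero_iff two_ne_zero |>.mp (by linarith)
    have y5 : ((a 5 : ℝ) - b 5 * s) = 0 :=
      pow_eq_zero_iff two_ne_zero |>.mp (by linarith)
    intro i
    fin_cases i <;> assumption
  intro i
  have hyi := hy i
  have : ((a i : ℝ)) + ((-(b i) : ℚ) : ℝ) * s = 0 := by push_cast; linarith
  obtain ⟨ha0, hb0⟩ := rat_add_rat_sqrt5_eq_zero this
  have hb0' : b i = 0 := by linarith [neg_eq_zero.mp hb0]
  rw [hab i, ha0, hb0']
  simp
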